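/- Fix an integer n ≥ 1 and a real 0 < α ≤ 1, and set k = ⌈α·n⌉ (so 1 ≤ k ≤ n). Let Q ⊆ {1,…,n} with |Q| = q, and let g : {0,1}^n → Bool be any function that depends only on the coordinates in Q (i.e., g(x) = g(y) whenever x_u = y_u for all u ∈ Q). If the μ_{n,k}-probability of the event {x : g(x) = (x = 0^n)} is at least 2/3, then 3·q·k ≥ n − q + 1. In particular, any such query set correctly distinguishing x = 0^n from weight-⌈αn⌉ vectors with success probability at least 2/3 must have size q = Ω(1/α). -/

import Mathlib

/-- The weight that the distribution `μ_{n,k}` puts on `x ∈ {0,1}^n`: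
mass `1/2` on the all-zeros vector and mass `1/(2·C(n,k))` on each vector with
exactly `k` ones. -/
noncomputable def muWeight (n k : ℕ) (x : Fin n → Bool) : ℝ :=
  if x = (fun _ => false) then 1 / 2
  else if (Finset.univ.filter (fun u => x u = true)).card = k then
    1 / (2 * (n.choose k : ℝ))
  else 0

/-- The `μ_{n,k}`-probability of an event `E ⊆ {0,1}^n`. -/
noncomputable def muProb (n k : ℕ) (E : Finset (Fin n → Bool)) : ℝ :=
  ∑ x ∈ E, muWeight n k x

theorem countLem (n k : ℕ) (P : Finset (Fin n)) :
    (Finset.univ.filter (fun x : Fin n → Bool =>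
      Finset.univ.filter (fun u => x u = true) ⊆ P ∧
      (Finset.univ.filter (fun u => x u = true)).card = k)).card = P.card.choose k := by
  rw [← Finset.card_powersetCard]
  refine Finset.card_bij' (fun x _ => Finset.univ.filter (fun u => x u = true))
    (fun s _ => fun u => decide (u ∈ s)) ?_ ?_ ?_ ?_
  · intro x hx
    simp only [Finset.mem_filter, Finset.mem_univ, true_and] at hx
    simp [Finset.mem_powersetCard, hx.1, hx.2]
  · intro s hs
    simp only [Finset.mem_powersetCard] at hs
    simp only [Finset.mem_filter, Finset.mem_univ, true_and]
    have hss : (Finset.univ.filter (fun u => decide (u ∈ s) = true)) = s := by ext u; simp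
    rw [hss]; exact hs
  · intro x hx; funext u; simp
  · intro s hs; ext u; simp

theorem chooseLem (m k : ℕ) (hm : 1 ≤ m) :
    m * m.choose k = m * (m-1).choose k + k * m.choose k := by
  rcases le_or_gt k m with h | h
  · have h1 := Nat.choose_mul_succ_eq (m-1) k
    rw [Nat.sub_add_cancel hm] at h1
    have h2 : m * m.choose k = (m - k) * m.choose k + k * m.choose k := by
      rw [← Nat.add_mul, Nat.sub_add_cancel h]
    rw [h2, mul_comm (m-k), ← h1, mul_comm]
  · simp [Nat.choose_eq_zero_of_lt h, Nat.choose_eq_zero_of_lt (show m-1<k by omega)]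

theorem indLem (n k : ℕ) : ∀ q, q ≤ n →
    (n - q + 1) * n.choose k ≤ (n - q + 1) * (n - q).choose k + q * k * n.choose k := by
  intro q
  induction q with
  | zero => simp
  | succ q ih =>
    intro hq
    have hqn : q ≤ n := by omega
    have IH := ih hqn
    set m := n - q with hm
    have hm1 : 1 ≤ m := by omega
    have hnq : n - (q+1) = m - 1 := by omega
    rw [hnq, show m-1+1 = m by omega]
    have hA := chooseLem m k hm1
    have hBA : (m).choose k ≤ n.choose k := Nat.choose_le_choose k (by omega)
    have hkBA : k * m.choose k ≤ k * n.choose k := Nat.mul_le_mul_left k hBA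
    nlinarith [hA, hBA, hkBA, IH]

theorem muW_nonneg (n k : ℕ) (x : Fin n → Bool) : 0 ≤ muWeight n k x := by
  unfold muWeight; split_ifs <;> positivity

theorem muW_zero (n k : ℕ) : muWeight n k (fun _ => false) = 1/2 := by simp [muWeight]

theorem ne_zero_of_card (n k : ℕ) (hk1 : 1 ≤ k) (x : Fin n → Bool)
    (h2 : (Finset.univ.filter (fun u => x u = true)).card = k) :
    x ≠ (fun _ => false) := by
  intro hxz
  subst hxz
  simp at h2
  omega

theorem muW_k (n k : ℕ) (x : Fin n → Bool) (h1 : x ≠ fun _ => false)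
    (h2 : (Finset.univ.filter (fun u => x u = true)).card = k) :
    muWeight n k x = 1 / (2 * (n.choose k : ℝ)) := by
  simp [muWeight, h1, h2]

theorem total (n k : ℕ) (hk1 : 1 ≤ k) (hkn : k ≤ n) :
    ∑ x : Fin n → Bool, muWeight n k x = 1 := by
  have hC : 0 < n.choose k := Nat.choose_pos hkn
  have hCR : (0:ℝ) < (n.choose k : ℝ) := by exact_mod_cast hC
  rw [← Finset.add_sum_erase _ _ (Finset.mem_univ (fun _ => false : Fin n → Bool)), muW_zero]
  have h1 : ∑ x ∈ Finset.univ.erase (fun _ => false : Fin n → Bool), muWeight n k x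
      = ∑ x ∈ Finset.univ.erase (fun _ => false : Fin n → Bool),
        (if (Finset.univ.filter (fun u => x u = true)).card = k
          then 1 / (2 * (n.choose k : ℝ)) else 0) := by
    refine Finset.sum_congr rfl (fun x hx => ?_)
    have hxZ : x ≠ (fun _ => false) := (Finset.mem_erase.mp hx).1
    simp [muWeight, hxZ]
  rw [h1, ← Finset.sum_filter, Finset.sum_const]
  have h2 : (Finset.univ.erase (fun _ => false : Fin n → Bool)).filter
        (fun x : Fin n → Bool => (Finset.univ.filter (fun u => x u = true)).card = k)
      = Finset.univ.filter
        (fun x : Fin n → Bool => (Finset.univ.filter (fun u => x u = true)).card = k) := by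
    rw [Finset.filter_erase]
    apply Finset.erase_eq_of_notMem
    intro hmem
    have := (Finset.mem_filter.mp hmem).2
    simp at this
    omega
  have h3 := countLem n k Finset.univ
  simp only [Finset.subset_univ, true_and, Finset.card_univ, Fintype.card_fin] at h3
  rw [h2, h3]
  field_simp
  rw [nsmul_eq_mul]; field_simp; ring

/-- Query lower bound: with `k = ⌈α n⌉`, any tester `g` reading only the coordinates in a
query set `Q` of size `q`, which is correct about whether `x = 0^n` with
`μ_{n,k}`-probability at least `2/3`, must satisfy `3qk ≥ n - q + 1`
(so `q = Ω(1/α)`). -/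
theorem stmt_13 (n : ℕ) (hn : 1 ≤ n) (α : ℝ) (hα0 : 0 < α) (hα1 : α ≤ 1)
    (k : ℕ) (hk : k = ⌈α * (n : ℝ)⌉₊)
    (Q : Finset (Fin n)) (q : ℕ) (hQ : Q.card = q)
    (g : (Fin n → Bool) → Bool)
    (hg : ∀ x y : Fin n → Bool, (∀ u ∈ Q, x u = y u) → g x = g y)
    (hsucc : 2 / 3 ≤ muProb n k (Finset.univ.filter
        (fun x : Fin n → Bool => g x = decide (x = fun _ => false)))) :
    (n : ℝ) - q + 1 ≤ 3 * q * k := by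
  classical
  have hk1 : 1 ≤ k := by
    rw [hk, Nat.one_le_ceil_iff]
    have : (0:ℝ) < (n:ℝ) := by exact_mod_cast hn
    positivity
  have hkn : k ≤ n := by
    rw [hk, Nat.ceil_le]
    nlinarith [(show (0:ℝ) ≤ (n:ℝ) by positivity)]
  have hqn : q ≤ n := by
    rw [← hQ]
    simpa using Finset.card_le_univ Q
  have hC : 0 < n.choose k := Nat.choose_pos hkn
  have hCR : (0:ℝ) < (n.choose k : ℝ) := by exact_mod_cast hC
  set E := Finset.univ.filter
      (fun x : Fin n → Bool => g x = decide (x = fun _ => false)) with hE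
  have htot := total n k hk1 hkn
  -- step A : g 0 = true
  have hgZ : g (fun _ => false) = true := by
    by_contra hgz
    have hZE : (fun _ => false : Fin n → Bool) ∉ E := by
      simp only [hE, Finset.mem_filter, Finset.mem_univ, true_and]
      simp [hgz]
    have hsub : E ⊆ Finset.univ.erase (fun _ => false : Fin n → Bool) := by
      intro x hx
      exact Finset.mem_erase.mpr ⟨fun h => hZE (h ▸ hx), Finset.mem_univ x⟩
    have hle : muProb n k E ≤ ∑ x ∈ Finset.univ.erase (fun _ => false : Fin n → Bool),
        muWeight n k x :=
      Finset.sum_le_sum_of_subset_of_nonneg hsub (fun x _ _ => muW_nonneg n k x)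
    have herase : ∑ x ∈ Finset.univ.erase (fun _ => false : Fin n → Bool),
        muWeight n k x = 1/2 := by
      have := Finset.add_sum_erase _ (muWeight n k) (Finset.mem_univ (fun _ => false : Fin n → Bool))
      rw [muW_zero] at this
      linarith [htot, this.symm]
    rw [herase] at hle
    linarith
  -- the blind set T
  set T := Finset.univ.filter (fun x : Fin n → Bool =>
      Finset.univ.filter (fun u => x u = true) ⊆ Qᶜ ∧
      (Finset.univ.filter (fun u => x u = true)).card = k) with hT
  have hTcard : T.card = (n - q).choose k := by
    rw [hT, countLem]
    congr 1
    rw [Finset.card_compl, Fintype.card_fin, hQ]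
  have hTE : ∀ x ∈ T, x ∉ E := by
    intro x hxT hxE
    simp only [hT, Finset.mem_filter, Finset.mem_univ, true_and] at hxT
    obtain ⟨hsub, hcard⟩ := hxT
    have hxne : x ≠ (fun _ => false) := ne_zero_of_card n k hk1 x hcard
    have hagree : ∀ u ∈ Q, x u = (fun _ => false : Fin n → Bool) u := by
      intro u hu
      by_contra hne
      have hxu : x u = true := by
        cases h : x u
        · exact absurd (by simp [h]) hne
        · rfl
      have : u ∈ Qᶜ := hsub (by simp [hxu])
      simp [Finset.mem_compl] at this
      exact this hu
    have hgx : g x = true := (hg x (fun _ => false) hagree).trans hgZ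
    simp only [hE, Finset.mem_filter, Finset.mem_univ, true_and] at hxE
    rw [hgx] at hxE
    exact hxne (of_decide_eq_true hxE.symm)
  have hsumT : ∑ x ∈ T, muWeight n k x = ((n - q).choose k : ℝ) / (2 * (n.choose k : ℝ)) := by
    have : ∀ x ∈ T, muWeight n k x = 1 / (2 * (n.choose k : ℝ)) := by
      intro x hx
      simp only [hT, Finset.mem_filter, Finset.mem_univ, true_and] at hx
      exact muW_k n k x (ne_zero_of_card n k hk1 x hx.2) hx.2
    rw [Finset.sum_congr rfl this, Finset.sum_const, hTcard, nsmul_eq_mul]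
    ring
  -- disjoint sum bound
  have hdisj : Disjoint E T := Finset.disjoint_left.mpr (fun x hxE hxT => hTE x hxT hxE)
  have hboth : muProb n k E + ∑ x ∈ T, muWeight n k x ≤ 1 := by
    have h1 : muProb n k E + ∑ x ∈ T, muWeight n k x = ∑ x ∈ E ∪ T, muWeight n k x :=
      (Finset.sum_union hdisj).symm
    rw [h1, ← htot]
    exact Finset.sum_le_sum_of_subset_of_nonneg (Finset.subset_univ _)
      (fun x _ _ => muW_nonneg n k x)
  rw [hsumT] at hboth
  have hratio : ((n - q).choose k : ℝ) / (2 * (n.choose k : ℝ)) ≤ 1/3 := by linarith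
  have hchoose : 3 * (n - q).choose k ≤ 2 * n.choose k := by
    have h1 : ((n - q).choose k : ℝ) * 3 ≤ 2 * (n.choose k : ℝ) := by
      rw [div_le_iff₀ (by positivity)] at hratio
      linarith
    exact_mod_cast (by linarith : (3 * ((n - q).choose k) : ℝ) ≤ (2 * (n.choose k) : ℝ))
  have hind := indLem n k q hqn
  have hmul : (n - q + 1) * n.choose k ≤ (3 * q * k) * n.choose k := by
    nlinarith [hind, hchoose]
  have hfin : n - q + 1 ≤ 3 * q * k := Nat.le_of_mul_le_mul_right
    (by simpa [mul_comm] using hmul) hC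
  have h2 : ((n - q + 1 : ℕ) : ℝ) ≤ ((3 * q * k : ℕ) : ℝ) := by exact_mod_cast hfin
  push_cast [Nat.cast_sub hqn] at h2
  linarith
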